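/- Let X be a real Banach space, let (S(t))_{t ≥ 0} be a continuous semigroup of contractions on X, let F : X → X be Lipschitz continuous, and let U₀ ∈ X. Then there exists a unique continuous curve U : [0, ∞) → X satisfying U(t) = S(t)U₀ − ∫₀ᵗ S(t−s) F(U(s)) ds for all t ≥ 0; that is, there exists a unique mild solution with initial datum U₀. -/

import Mathlib

open Set MeasureTheory intervalIntegral Function

section

variable {X : Type*} [NormedAddCommGroup X] [NormedSpace ℝ X] [CompleteSpace X]
  {S : ℝ → X →L[ℝ] X} {F : X → X} {L : NNReal}

lemma mild_aux_joint (S : ℝ → X →L[ℝ] X)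
    (hS_contr : ∀ t ≥ (0:ℝ), ‖S t‖ ≤ 1)
    (hS_cont : ∀ x : X, ContinuousOn (fun t => S t x) (Set.Ici (0:ℝ))) :
    Continuous fun p : ℝ × X => S (max p.1 0) p.2 := by
  have hc : ∀ x : X, Continuous fun t : ℝ => S (max t 0) x := fun x =>
    (hS_cont x).comp_continuous (continuous_id.max continuous_const)
      (fun t => mem_Ici.2 (le_max_right _ _))
  rw [Metric.continuous_iff]
  rintro ⟨t₀, x₀⟩ ε hε
  obtain ⟨δ, hδ, h1⟩ := Metric.continuous_iff.1 (hc x₀) t₀ (ε/2) (by linarith)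
  refine ⟨min δ (ε/2), by positivity, ?_⟩
  rintro ⟨t, x⟩ h
  rw [Prod.dist_eq, max_lt_iff] at h
  have h2 : dist (S (max t 0) x) (S (max t 0) x₀) ≤ dist x x₀ := by
    rw [dist_eq_norm, dist_eq_norm, ← map_sub]
    calc ‖S (max t 0) (x - x₀)‖ ≤ ‖S (max t 0)‖ * ‖x - x₀‖ := (S _).le_opNorm _
      _ ≤ 1 * ‖x - x₀‖ := by gcongr; exact hS_contr _ (le_max_right _ _)
      _ = ‖x - x₀‖ := one_mul _
  calc dist (S (max t 0) x) (S (max t₀ 0) x₀)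
      ≤ dist (S (max t 0) x) (S (max t 0) x₀) + dist (S (max t 0) x₀) (S (max t₀ 0) x₀) :=
        dist_triangle _ _ _
    _ < ε/2 + ε/2 := by
        have ha := h1 t (lt_of_lt_of_le h.1 (min_le_left _ _))
        have hb := lt_of_le_of_lt h2 (lt_of_lt_of_le h.2 (min_le_right _ _))
        exact add_lt_add hb ha
    _ = ε := add_halves ε

lemma mild_aux_key
    (hS_contr : ∀ t ≥ (0:ℝ), ‖S t‖ ≤ 1)
    (hS_cont : ∀ x : X, ContinuousOn (fun t => S t x) (Set.Ici (0:ℝ)))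
    (hF : LipschitzWith L F) (U₀ : X) (T : ℝ) (hT : 0 < T) :
    ∃ u : ℝ → X, Continuous u ∧
      (∀ t ∈ Icc (0:ℝ) T, u t = S t U₀ - ∫ s in (0:ℝ)..t, S (t - s) (F (u s))) ∧
      (∀ v : ℝ → X, ContinuousOn v (Icc 0 T) →
        (∀ t ∈ Icc (0:ℝ) T, v t = S t U₀ - ∫ s in (0:ℝ)..t, S (t - s) (F (v s))) →
        EqOn u v (Icc 0 T)) := by
  have hJ := mild_aux_joint S hS_contr hS_cont
  haveI : Nonempty (Icc (0:ℝ) T) := ⟨⟨0, le_rfl, hT.le⟩⟩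
  -- joint continuity of the integrand for any continuous curve
  have hInt : ∀ u : C(Icc (0:ℝ) T, X),
      Continuous (uncurry fun (t s : ℝ) => S (max (t - s) 0) (F (IccExtend hT.le u s))) := by
    intro u
    have : Continuous fun p : ℝ × ℝ => ((p.1 - p.2 : ℝ), F (IccExtend hT.le u p.2)) := by
      refine Continuous.prodMk (continuous_fst.sub continuous_snd) ?_
      exact (hF.continuous.comp (u.continuous.Icc_extend')).comp continuous_snd
    exact hJ.comp this
  -- the Picard map
  let Φ : C(Icc (0:ℝ) T, X) → C(Icc (0:ℝ) T, X) := fun u =>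
    ⟨fun t => S (t:ℝ) U₀ - ∫ s in (0:ℝ)..(t:ℝ), S (max ((t:ℝ) - s) 0)
        (F (IccExtend hT.le u s)), by
      refine Continuous.sub ?_ ?_
      · exact (hS_cont U₀).comp_continuous continuous_subtype_val (fun t => t.2.1)
      · exact (continuous_parametric_intervalIntegral_of_continuous (hInt u)
          continuous_id).comp continuous_subtype_val⟩
  -- iterate estimate
  have hest : ∀ (u v : C(Icc (0:ℝ) T, X)) (n : ℕ) (t : Icc (0:ℝ) T),
      ‖(Φ^[n] u) t - (Φ^[n] v) t‖ ≤ ((L:ℝ) * (t:ℝ))^n / n.factorial * ‖u - v‖ := by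
    intro u v n
    induction n with
    | zero =>
      intro t
      simpa using ((u - v).norm_coe_le_norm t)
    | succ n ih =>
      intro t
      rw [iterate_succ_apply', iterate_succ_apply']
      set a := Φ^[n] u with ha
      set b := Φ^[n] v with hb
      have ht0 : (0:ℝ) ≤ (t:ℝ) := t.2.1
      have hcomp : Φ a t - Φ b t = ∫ s in (0:ℝ)..(t:ℝ),
          (S (max ((t:ℝ) - s) 0) (F (IccExtend hT.le b s))
            - S (max ((t:ℝ) - s) 0) (F (IccExtend hT.le a s))) := by
        have hia : IntervalIntegrable
            (fun s => S (max ((t:ℝ) - s) 0) (F (IccExtend hT.le a s))) volume 0 (t:ℝ) :=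
          ((hInt a).comp (Continuous.prodMk (continuous_const) continuous_id)).intervalIntegrable _ _
        have hib : IntervalIntegrable
            (fun s => S (max ((t:ℝ) - s) 0) (F (IccExtend hT.le b s))) volume 0 (t:ℝ) :=
          ((hInt b).comp (Continuous.prodMk (continuous_const) continuous_id)).intervalIntegrable _ _
        show (S (t:ℝ) U₀ - _) - (S (t:ℝ) U₀ - _) = _
        rw [intervalIntegral.integral_sub hib hia]
        abel
      rw [hcomp]
      have hC : (0:ℝ) ≤ ‖u - v‖ := norm_nonneg _
      calc ‖∫ s in (0:ℝ)..(t:ℝ), (S (max ((t:ℝ) - s) 0) (F (IccExtend hT.le b s))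
              - S (max ((t:ℝ) - s) 0) (F (IccExtend hT.le a s)))‖
          ≤ ∫ s in (0:ℝ)..(t:ℝ), ‖S (max ((t:ℝ) - s) 0) (F (IccExtend hT.le b s))
              - S (max ((t:ℝ) - s) 0) (F (IccExtend hT.le a s))‖ :=
            intervalIntegral.norm_integral_le_integral_norm ht0
        _ ≤ ∫ s in (0:ℝ)..(t:ℝ), (L:ℝ) * (((L:ℝ) * s)^n / n.factorial * ‖u - v‖) := by
            refine intervalIntegral.integral_mono_on ht0 ?_ ?_ ?_
            · exact (((hInt b).comp (Continuous.prodMk continuous_const continuous_id)).sub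
                ((hInt a).comp (Continuous.prodMk continuous_const continuous_id))).norm.intervalIntegrable _ _
            · exact (Continuous.mul continuous_const ((((continuous_const.mul continuous_id).pow n).div_const _).mul
                continuous_const)).intervalIntegrable _ _
            · intro s hs
              have hsT : s ∈ Icc (0:ℝ) T := ⟨hs.1, hs.2.trans t.2.2⟩
              rw [← map_sub]
              calc ‖S (max ((t:ℝ) - s) 0) (F (IccExtend hT.le b s) - F (IccExtend hT.le a s))‖
                  ≤ ‖S (max ((t:ℝ) - s) 0)‖ * ‖F (IccExtend hT.le b s) - F (IccExtend hT.le a s)‖ :=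
                    (S _).le_opNorm _
                _ ≤ 1 * ((L:ℝ) * ‖IccExtend hT.le b s - IccExtend hT.le a s‖) := by
                    gcongr
                    · exact hS_contr _ (le_max_right _ _)
                    · simpa [dist_eq_norm] using hF.dist_le_mul (IccExtend hT.le b s) (IccExtend hT.le a s)
                _ = (L:ℝ) * ‖b ⟨s, hsT⟩ - a ⟨s, hsT⟩‖ := by
                    rw [one_mul, IccExtend_of_mem _ _ hsT, IccExtend_of_mem _ _ hsT]
                _ ≤ (L:ℝ) * (((L:ℝ) * s)^n / n.factorial * ‖u - v‖) := by
                    have := ih ⟨s, hsT⟩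
                    rw [norm_sub_rev] at this
                    exact mul_le_mul_of_nonneg_left this L.coe_nonneg
        _ = ((L:ℝ) * (t:ℝ))^(n+1) / (n+1).factorial * ‖u - v‖ := by
            have heq : (fun s : ℝ => (L:ℝ) * (((L:ℝ) * s)^n / n.factorial * ‖u - v‖))
                = fun s : ℝ => ((L:ℝ)^(n+1) / n.factorial * ‖u - v‖) * s^n := by
              funext s; ring
            rw [heq, intervalIntegral.integral_const_mul, integral_pow]
            have hfac : ((n+1).factorial : ℝ) = (n+1) * n.factorial := by
              rw [Nat.factorial_succ]; push_cast; ring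
            have hne : (n.factorial : ℝ) ≠ 0 := Nat.cast_ne_zero.2 n.factorial_ne_zero
            have hne2 : ((n:ℝ)+1) ≠ 0 := by positivity
            rw [hfac]
            field_simp
            try ring
  -- sup norm estimate
  have hsup : ∀ (n : ℕ) (u v : C(Icc (0:ℝ) T, X)),
      ‖Φ^[n] u - Φ^[n] v‖ ≤ ((L:ℝ) * T)^n / n.factorial * ‖u - v‖ := by
    intro n u v
    refine (ContinuousMap.norm_le _ (by positivity)).2 (fun t => ?_)
    rw [ContinuousMap.sub_apply]
    refine (hest u v n t).trans ?_
    refine mul_le_mul_of_nonneg_right ?_ (norm_nonneg _)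
    refine div_le_div_of_nonneg_right ?_ (by positivity)
    exact pow_le_pow_left₀ (mul_nonneg L.coe_nonneg t.2.1)
      (mul_le_mul_of_nonneg_left t.2.2 L.coe_nonneg) n
  obtain ⟨n, hn⟩ : ∃ n : ℕ, ((L:ℝ) * T)^n / n.factorial < 1 :=
    ((FloorSemiring.tendsto_pow_div_factorial_atTop ((L:ℝ) * T)).eventually
      (gt_mem_nhds zero_lt_one)).exists
  set K : NNReal := ⟨((L:ℝ) * T)^n / n.factorial, by positivity⟩ with hKdef
  have hKlt : K < 1 := by rw [← NNReal.coe_lt_one]; exact hn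
  have hcontr : ContractingWith K (Φ^[n]) := by
    refine ⟨hKlt, LipschitzWith.of_dist_le_mul fun u v => ?_⟩
    rw [dist_eq_norm, dist_eq_norm]
    exact hsup n u v
  have hfix : Function.IsFixedPt Φ (hcontr.fixedPoint (Φ^[n])) :=
    hcontr.isFixedPt_fixedPoint_iterate
  set u₀ := hcontr.fixedPoint (Φ^[n]) with hu₀def
  refine ⟨IccExtend hT.le u₀, u₀.continuous.Icc_extend', ?_, ?_⟩
  · intro t ht
    have h1 : IccExtend hT.le (⇑u₀) t = u₀ ⟨t, ht⟩ := IccExtend_of_mem _ _ ht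
    have h2 : (Φ u₀) ⟨t, ht⟩ = u₀ ⟨t, ht⟩ := DFunLike.congr_fun hfix ⟨t, ht⟩
    rw [h1, ← h2]
    show S t U₀ - ∫ s in (0:ℝ)..t, S (max (t - s) 0) (F (IccExtend hT.le (⇑u₀) s)) = _
    congr 1
    refine intervalIntegral.integral_congr fun s hs => ?_
    rw [uIcc_of_le ht.1] at hs
    rw [max_eq_left (by linarith [hs.2] : (0:ℝ) ≤ t - s)]
  · intro v hv hvD
    set w : C(Icc (0:ℝ) T, X) := ⟨fun t => v t, hv.restrict⟩ with hwdef
    have hwfix : Function.IsFixedPt Φ w := by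
      show Φ w = w
      ext t
      show S (t:ℝ) U₀ - ∫ s in (0:ℝ)..(t:ℝ),
          S (max ((t:ℝ) - s) 0) (F (IccExtend hT.le (⇑w) s)) = v (t:ℝ)
      rw [hvD (t:ℝ) t.2]
      congr 1
      refine intervalIntegral.integral_congr fun s hs => ?_
      rw [uIcc_of_le t.2.1] at hs
      have hsT : s ∈ Icc (0:ℝ) T := ⟨hs.1, hs.2.trans t.2.2⟩
      rw [max_eq_left (by linarith [hs.2] : (0:ℝ) ≤ (t:ℝ) - s), IccExtend_of_mem _ _ hsT]
      rfl
    have hwu : w = u₀ := hcontr.fixedPoint_unique (hwfix.iterate n)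
    intro t ht
    calc IccExtend hT.le (⇑u₀) t = u₀ ⟨t, ht⟩ := IccExtend_of_mem _ _ ht
      _ = w ⟨t, ht⟩ := by rw [hwu]
      _ = v t := rfl

end

/-- Existence and uniqueness of mild solutions: given a continuous
semigroup of contractions `S` on a real Banach space `X`, a Lipschitz map `F : X → X`,
and an initial datum `U₀`, there is a unique continuous curve `U` on `[0, ∞)` satisfying
the Duhamel formula `U t = S t U₀ - ∫ s in 0..t, S (t - s) (F (U s))`. -/
theorem mild_solution_exists_unique
    {X : Type*} [NormedAddCommGroup X] [NormedSpace ℝ X] [CompleteSpace X]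
    (S : ℝ → X →L[ℝ] X)
    (hS_contr : ∀ t ≥ (0:ℝ), ‖S t‖ ≤ 1)
    (hS_zero : S 0 = ContinuousLinearMap.id ℝ X)
    (hS_add : ∀ s ≥ (0:ℝ), ∀ t ≥ (0:ℝ), S (s + t) = (S s).comp (S t))
    (hS_cont : ∀ x : X, ContinuousOn (fun t => S t x) (Set.Ici (0:ℝ)))
    (F : X → X) (L : NNReal) (hF : LipschitzWith L F) (U₀ : X) :
    ∃ U : ℝ → X,
      (ContinuousOn U (Set.Ici 0) ∧
        ∀ t ≥ (0:ℝ), U t = S t U₀ - ∫ s in (0:ℝ)..t, S (t - s) (F (U s))) ∧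
      ∀ V : ℝ → X,
        (ContinuousOn V (Set.Ici 0) ∧
          ∀ t ≥ (0:ℝ), V t = S t U₀ - ∫ s in (0:ℝ)..t, S (t - s) (F (V s))) →
        Set.EqOn U V (Set.Ici 0) := by
  classical
  have key := fun (T : ℝ) (hT : 0 < T) =>
    mild_aux_key (S := S) (F := F) (L := L) hS_contr hS_cont hF U₀ T hT
  let sol : ∀ T : ℝ, 0 < T → ℝ → X := fun T hT => (key T hT).choose
  have hsolC : ∀ T hT, Continuous (sol T hT) := fun T hT => (key T hT).choose_spec.1
  have hsolD : ∀ T hT, ∀ t ∈ Icc (0:ℝ) T,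
      sol T hT t = S t U₀ - ∫ s in (0:ℝ)..t, S (t - s) (F (sol T hT s)) :=
    fun T hT => (key T hT).choose_spec.2.1
  have hsolU : ∀ T hT, ∀ v : ℝ → X, ContinuousOn v (Icc 0 T) →
      (∀ t ∈ Icc (0:ℝ) T, v t = S t U₀ - ∫ s in (0:ℝ)..t, S (t - s) (F (v s))) →
      EqOn (sol T hT) v (Icc 0 T) := fun T hT => (key T hT).choose_spec.2.2
  have hmono : ∀ T₁ T₂ (h1 : 0 < T₁) (h2 : 0 < T₂), T₁ ≤ T₂ →
      EqOn (sol T₁ h1) (sol T₂ h2) (Icc 0 T₁) := by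
    intro T₁ T₂ h1 h2 h12
    refine hsolU T₁ h1 _ (hsolC T₂ h2).continuousOn ?_
    intro t ht
    exact hsolD T₂ h2 t ⟨ht.1, ht.2.trans h12⟩
  have hpos : ∀ t : ℝ, (0:ℝ) < max t 1 := fun t => lt_of_lt_of_le one_pos (le_max_right _ _)
  set U : ℝ → X := fun t => sol (max t 1) (hpos t) t with hUdef
  have hUeq : ∀ T (hT : 1 ≤ T), ∀ t ∈ Icc (0:ℝ) T,
      U t = sol T (lt_of_lt_of_le one_pos hT) t := by
    intro T hT t ht
    exact hmono (max t 1) T (hpos t) (lt_of_lt_of_le one_pos hT) (max_le ht.2 hT)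
      ⟨ht.1, le_max_left _ _⟩
  refine ⟨U, ⟨?_, ?_⟩, ?_⟩
  · -- continuity on Ici 0
    intro t₀ ht₀
    have hT1 : (1:ℝ) ≤ max (t₀+1) 1 := le_max_right _ _
    have hmem : Set.Iio (t₀+1) ∈ nhdsWithin t₀ (Set.Ici (0:ℝ)) :=
      nhdsWithin_le_nhds (Iio_mem_nhds (lt_add_one t₀))
    refine ContinuousWithinAt.congr_of_eventuallyEq
      ((hsolC _ (lt_of_lt_of_le one_pos hT1)).continuousAt.continuousWithinAt) ?_ ?_
    · filter_upwards [hmem, self_mem_nhdsWithin] with s hs1 hs2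
      exact hUeq (max (t₀+1) 1) hT1 s ⟨hs2, (le_of_lt hs1).trans (le_max_left _ _)⟩
    · exact hUeq (max (t₀+1) 1) hT1 t₀ ⟨ht₀, by
        have := le_max_left (t₀+1) (1:ℝ); linarith⟩
  · -- Duhamel formula
    intro t ht
    have hT1 : (1:ℝ) ≤ max t 1 := le_max_right _ _
    have htm : t ∈ Icc (0:ℝ) (max t 1) := ⟨ht, le_max_left _ _⟩
    rw [hUeq (max t 1) hT1 t htm, hsolD (max t 1) (lt_of_lt_of_le one_pos hT1) t htm]
    congr 1
    refine intervalIntegral.integral_congr fun s hs => ?_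
    rw [uIcc_of_le ht] at hs
    rw [← hUeq (max t 1) hT1 s ⟨hs.1, hs.2.trans (le_max_left _ _)⟩]
  · -- uniqueness
    rintro V ⟨hVc, hVD⟩ t ht
    have hT1 : (1:ℝ) ≤ max t 1 := le_max_right _ _
    have htm : t ∈ Icc (0:ℝ) (max t 1) := ⟨ht, le_max_left _ _⟩
    rw [hUeq (max t 1) hT1 t htm]
    exact hsolU (max t 1) (lt_of_lt_of_le one_pos hT1) V
      (hVc.mono fun s hs => hs.1) (fun s hs => hVD s hs.1) htm
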